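/- Let σ ∈ L^∞(ℝ³) with supp σ ⊆ D, D ⊂ ℝ³ bounded, and x̂ ∈ S². Then for all K > 0, (1/K²)·∫_K^{2K} ∫_K^{2K} |σ²‾^(( k₁ − k₂) x̂)|² dk₁ dk₂ ≤ C·K^{−1/2}, where σ²‾^ denotes the Fourier transform of σ² and C is independent of K and x̂. -/

import Mathlib

open MeasureTheory Real
open scoped RealInnerProductSpace

lemma coord_meas (i : Fin 3) : Measurable fun w : EuclideanSpace ℝ (Fin 3) => w i :=
  (EuclideanSpace.proj (𝕜 := ℝ) i).continuous.measurable

lemma coord_le_norm (w : EuclideanSpace ℝ (Fin 3)) (i : Fin 3) : |w i| ≤ ‖w‖ := by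
  rw [EuclideanSpace.norm_eq]
  have h1 : |w i| = Real.sqrt (‖w i‖ ^ 2) := by
    rw [Real.sqrt_sq_eq_abs]; simp
  rw [h1]
  apply Real.sqrt_le_sqrt
  exact Finset.single_le_sum (f := fun j => ‖w j‖ ^ 2) (fun j _ => by positivity) (Finset.mem_univ i)

lemma slab_volume (xhat : EuclideanSpace ℝ (Fin 3)) (hx : ‖xhat‖ = 1) (R ε c : ℝ)
    (hR : 0 ≤ R) (hε : 0 ≤ ε) :
    volume {y : EuclideanSpace ℝ (Fin 3) | ‖y‖ ≤ R ∧ |⟪xhat, y⟫ - c| < ε}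
      ≤ ENNReal.ofReal (8 * R ^ 2 * ε) := by
  have hortho : Orthonormal ℝ (({0} : Set (Fin 3)).restrict fun _ : Fin 3 => xhat) := by
    constructor
    · intro i; exact hx
    · intro i j hij
      exact absurd (Subtype.ext (by rw [i.2, j.2])) hij
  obtain ⟨b, hb⟩ := hortho.exists_orthonormalBasis_extension_of_card_eq
      (by simp [finrank_euclideanSpace])
  have hb0 : b 0 = xhat := hb 0 rfl
  set W : Set (EuclideanSpace ℝ (Fin 3)) :=
    {w | |w 0 - c| < ε ∧ ∀ i, |w i| ≤ R} with hW
  have hWmeas : MeasurableSet W := by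
    apply MeasurableSet.inter
    · exact measurableSet_lt (((coord_meas 0).sub measurable_const).abs) measurable_const
    · show MeasurableSet {w : EuclideanSpace ℝ (Fin 3) | ∀ i, |w i| ≤ R}
      have : {w : EuclideanSpace ℝ (Fin 3) | ∀ i, |w i| ≤ R} = ⋂ i, {w | |w i| ≤ R} := by
        ext w; simp
      rw [this]
      exact MeasurableSet.iInter fun i => measurableSet_le ((coord_meas i).abs) measurable_const
  have hsub : {y : EuclideanSpace ℝ (Fin 3) | ‖y‖ ≤ R ∧ |⟪xhat, y⟫ - c| < ε}
      ⊆ b.repr ⁻¹' W := by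
    rintro y ⟨hy1, hy2⟩
    refine ⟨?_, fun i => ?_⟩
    · rw [b.repr_apply_apply, hb0]
      exact hy2
    · exact (coord_le_norm _ i).trans (by rw [b.repr.norm_map]; exact hy1)
  refine (measure_mono hsub).trans ?_
  rw [b.measurePreserving_repr.measure_preimage hWmeas.nullMeasurableSet]
  have hpi := (EuclideanSpace.volume_preserving_symm_measurableEquiv_toLp (Fin 3)).symm
  rw [← hpi.measure_preimage (hWmeas.nullMeasurableSet)]
  set I : Fin 3 → Set ℝ := fun i => if i = 0 then Set.Ioo (c - ε) (c + ε) else Set.Icc (-R) R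
    with hI
  have hsub2 : (MeasurableEquiv.toLp 2 (Fin 3 → ℝ)).symm.symm ⁻¹' W ⊆ Set.univ.pi I := by
    rintro v ⟨hv1, hv2⟩
    simp only [MeasurableEquiv.symm_symm, MeasurableEquiv.coe_toLp, PiLp.toLp_apply] at hv1 hv2
    intro i _
    simp only [I]
    rcases eq_or_ne i 0 with h | h
    · subst h
      rw [if_pos rfl]
      have := abs_lt.mp hv1
      exact ⟨by linarith [this.1], by linarith [this.2]⟩
    · rw [if_neg h]
      exact abs_le.mp (hv2 i)
  refine (measure_mono hsub2).trans ?_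
  rw [volume_pi_pi]
  have h0 : volume (I 0) = ENNReal.ofReal (2 * ε) := by
    simp [hI, Real.volume_Ioo]; ring_nf; simp [ENNReal.ofReal_mul hε]
  have h1 : volume (I 1) = ENNReal.ofReal (2 * R) := by
    simp [hI, Real.volume_Icc]; ring_nf; simp [ENNReal.ofReal_mul hR]
  have h2 : volume (I 2) = ENNReal.ofReal (2 * R) := by
    simp [hI, Real.volume_Icc]; ring_nf; simp [ENNReal.ofReal_mul hR]
  rw [Fin.prod_univ_three, h0, h1, h2,
    ← ENNReal.ofReal_mul (by positivity), ← ENNReal.ofReal_mul (by positivity)]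
  apply ENNReal.ofReal_le_ofReal
  nlinarith [sq_nonneg R, hε]

lemma prod_slab (xhat : EuclideanSpace ℝ (Fin 3)) (hx : ‖xhat‖ = 1) (R ε : ℝ)
    (hR : 0 ≤ R) (hε : 0 ≤ ε) :
    (volume.prod volume) {p : EuclideanSpace ℝ (Fin 3) × EuclideanSpace ℝ (Fin 3) |
        |⟪xhat, p.1⟫ - ⟪xhat, p.2⟫| < ε ∧ ‖p.1‖ ≤ R ∧ ‖p.2‖ ≤ R}
      ≤ ENNReal.ofReal (8 * R ^ 2 * ε) * volume (Metric.closedBall (0 : EuclideanSpace ℝ (Fin 3)) R) := by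
  have hu : Continuous fun y : EuclideanSpace ℝ (Fin 3) => (⟪xhat, y⟫ : ℝ) :=
    continuous_const.inner continuous_id
  have hT : MeasurableSet {p : EuclideanSpace ℝ (Fin 3) × EuclideanSpace ℝ (Fin 3) |
      |⟪xhat, p.1⟫ - ⟪xhat, p.2⟫| < ε ∧ ‖p.1‖ ≤ R ∧ ‖p.2‖ ≤ R} := by
    apply MeasurableSet.inter
    · exact measurableSet_lt
        (((hu.comp continuous_fst).sub (hu.comp continuous_snd)).abs.measurable) measurable_const
    · exact (measurableSet_le continuous_fst.norm.measurable measurable_const).inter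
        (measurableSet_le continuous_snd.norm.measurable measurable_const)
  rw [Measure.prod_apply hT]
  have hbound : ∀ y : EuclideanSpace ℝ (Fin 3),
      volume (Prod.mk y ⁻¹' {p : EuclideanSpace ℝ (Fin 3) × EuclideanSpace ℝ (Fin 3) |
        |⟪xhat, p.1⟫ - ⟪xhat, p.2⟫| < ε ∧ ‖p.1‖ ≤ R ∧ ‖p.2‖ ≤ R})
      ≤ Set.indicator (Metric.closedBall (0 : EuclideanSpace ℝ (Fin 3)) R)
          (fun _ => ENNReal.ofReal (8 * R ^ 2 * ε)) y := by
    intro y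
    by_cases hy : y ∈ Metric.closedBall (0 : EuclideanSpace ℝ (Fin 3)) R
    · rw [Set.indicator_of_mem hy]
      refine le_trans (measure_mono ?_) (slab_volume xhat hx R ε (⟪xhat, y⟫ : ℝ) hR hε)
      rintro z ⟨h1, _, h3⟩
      exact ⟨h3, by rwa [abs_sub_comm] at h1⟩
    · rw [Set.indicator_of_notMem hy]
      have hemp : (Prod.mk y ⁻¹' {p : EuclideanSpace ℝ (Fin 3) × EuclideanSpace ℝ (Fin 3) |
          |⟪xhat, p.1⟫ - ⟪xhat, p.2⟫| < ε ∧ ‖p.1‖ ≤ R ∧ ‖p.2‖ ≤ R}) = ∅ := by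
        ext z
        simp only [Set.mem_preimage, Set.mem_setOf_eq, Set.mem_empty_iff_false, iff_false]
        rintro ⟨_, h2, _⟩
        exact absurd (Metric.mem_closedBall.mpr (by simpa using h2)) hy
      rw [hemp, measure_empty]
  calc ∫⁻ y, volume (Prod.mk y ⁻¹' _) ≤ ∫⁻ y, Set.indicator (Metric.closedBall (0 : EuclideanSpace ℝ (Fin 3)) R)
          (fun _ => ENNReal.ofReal (8 * R ^ 2 * ε)) y := lintegral_mono hbound
    _ = ENNReal.ofReal (8 * R ^ 2 * ε) * volume (Metric.closedBall (0 : EuclideanSpace ℝ (Fin 3)) R) := by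
        rw [lintegral_indicator Metric.isClosed_closedBall.measurableSet, setLIntegral_const]

lemma norm_exp_neg_I_mul (r : ℝ) : ‖Complex.exp (-Complex.I * (r : ℂ))‖ = 1 := by
  rw [Complex.norm_exp]
  simp [Complex.mul_re]

/-- Fourier transform of `σ²` with normalization `(2π)^{-3/2}`. -/
noncomputable def ftSigmaSq (σ : EuclideanSpace ℝ (Fin 3) → ℝ)
    (ξ : EuclideanSpace ℝ (Fin 3)) : ℂ :=
  (((2 * π : ℝ) ^ (-(3 : ℝ)/2) : ℝ) : ℂ) * ∫ y, Complex.exp (-Complex.I * (⟪ξ, y⟫ : ℝ)) * ((σ y) ^ 2 : ℝ)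

set_option maxHeartbeats 1000000 in
theorem avg_difference_frequency_estimate
    (D : Set (EuclideanSpace ℝ (Fin 3))) (hD : Bornology.IsBounded D)
    (σ : EuclideanSpace ℝ (Fin 3) → ℝ)
    (hσbdd : ∃ M : ℝ, ∀ x, |σ x| ≤ M) (hσmeas : Measurable σ)
    (hσsupp : Function.support σ ⊆ D) :
    ∃ C : ℝ, 0 < C ∧ ∀ xhat : EuclideanSpace ℝ (Fin 3), ‖xhat‖ = 1 →
      ∀ K : ℝ, 0 < K →
        (1 / K ^ 2) * ∫ k₁ in K..(2*K), ∫ k₂ in K..(2*K),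
            ‖ftSigmaSq σ ((k₁ - k₂) • xhat)‖ ^ 2
          ≤ C * K ^ (-(1 : ℝ)/2) := by
  obtain ⟨M, hM⟩ := hσbdd
  have hM0 : 0 ≤ M := le_trans (abs_nonneg _) (hM 0)
  obtain ⟨R, hR0, hDR⟩ := hD.subset_closedBall_lt 0 0
  set f : EuclideanSpace ℝ (Fin 3) → ℝ := fun y => σ y ^ 2 with hf
  have hfmeas : Measurable f := hσmeas.pow_const 2
  have hf0 : ∀ y, 0 ≤ f y := fun y => sq_nonneg _
  have hfle : ∀ y, f y ≤ M ^ 2 := fun y => by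
    calc f y = |σ y| ^ 2 := (sq_abs _).symm
      _ ≤ M ^ 2 := pow_le_pow_left₀ (abs_nonneg _) (hM y) 2
  have hfsupp : Function.support f ⊆ Metric.closedBall 0 R := by
    intro y hy
    apply hDR; apply hσsupp
    simp only [Function.mem_support, hf] at hy ⊢
    exact fun h => hy (by rw [h]; ring)
  have hfint : Integrable f := by
    rw [← integrableOn_iff_integrable_of_support_subset hfsupp]
    exact Measure.integrableOn_of_bounded (measure_closedBall_lt_top).ne
      hfmeas.aestronglyMeasurable
      (ae_of_all _ fun y => by rw [Real.norm_eq_abs, abs_of_nonneg (hf0 y)]; exact hfle y)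
  set I : ℝ := ∫ y, f y with hI
  have hI0 : 0 ≤ I := integral_nonneg hf0
  set V : ℝ := (volume (Metric.closedBall (0 : EuclideanSpace ℝ (Fin 3)) R)).toReal with hV
  have hV0 : 0 ≤ V := ENNReal.toReal_nonneg
  set C₀ : ℝ := 16 * M ^ 4 * R ^ 2 * V + 2 * I ^ 2 with hC₀
  have hC₀0 : 0 ≤ C₀ := by positivity
  refine ⟨C₀ + 1, by positivity, ?_⟩
  intro xhat hxhat K hK
  set u : EuclideanSpace ℝ (Fin 3) → ℝ := fun y => ⟪xhat, y⟫ with hu'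
  have hu : Continuous u := continuous_const.inner continuous_id
  set g : ℝ → ℂ := fun k => ∫ y, Complex.exp (-Complex.I * ((k * u y : ℝ) : ℂ)) * ((f y : ℝ) : ℂ)
    with hg
  have hft : ∀ s : ℝ, ftSigmaSq σ (s • xhat) = (((2 * π : ℝ) ^ (-(3 : ℝ)/2) : ℝ) : ℂ) * g s := by
    intro s
    unfold ftSigmaSq
    rw [hg]
    congr 1
    congr 1
    funext y
    rw [real_inner_smul_left]
  have hc0 : (0:ℝ) < (2 * π : ℝ) ^ (-(3 : ℝ)/2) := Real.rpow_pos_of_pos (by positivity) _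
  have hc1 : (2 * π : ℝ) ^ (-(3 : ℝ)/2) ≤ 1 :=
    Real.rpow_le_one_of_one_le_of_nonpos (by nlinarith [Real.pi_gt_three]) (by norm_num)
  have hftle : ∀ s : ℝ, ‖ftSigmaSq σ (s • xhat)‖ ≤ ‖g s‖ := by
    intro s
    rw [hft s, norm_mul, Complex.norm_real, Real.norm_eq_abs, abs_of_pos hc0]
    calc (2 * π : ℝ) ^ (-(3 : ℝ)/2) * ‖g s‖ ≤ 1 * ‖g s‖ := by gcongr
      _ = ‖g s‖ := one_mul _
  have hgnorm : ∀ k : ℝ, ‖g k‖ ≤ I := by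
    intro k
    refine (norm_integral_le_integral_norm _).trans (le_of_eq ?_)
    rw [hI]
    congr 1
    funext y
    rw [norm_mul, norm_exp_neg_I_mul, one_mul, Complex.norm_real, Real.norm_eq_abs,
      abs_of_nonneg (hf0 y)]
  have hgcont : Continuous g := by
    rw [hg]
    apply continuous_of_dominated (bound := f)
    · intro k
      apply Measurable.aestronglyMeasurable
      exact (Complex.continuous_exp.measurable.comp
        ((Complex.measurable_ofReal.comp (hu.measurable.const_mul k)).const_mul (-Complex.I))).mul
        (Complex.measurable_ofReal.comp hfmeas)
    · intro k
      filter_upwards with y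
      rw [norm_mul, norm_exp_neg_I_mul, one_mul, Complex.norm_real, Real.norm_eq_abs,
        abs_of_nonneg (hf0 y)]
    · exact hfint
    · filter_upwards with y
      exact (Complex.continuous_exp.comp (by fun_prop)).mul continuous_const
  set ψ : ℝ → ℝ := fun s => ‖g s‖ ^ 2 with hψ
  have hψcont : Continuous ψ := hgcont.norm.pow 2
  have hψ0 : ∀ s, 0 ≤ ψ s := fun s => by positivity
  set J : ℝ := ∫ s in (-K)..K, ψ s with hJ
  have hJ0 : 0 ≤ J := by
    rw [hJ]
    apply intervalIntegral.integral_nonneg (by linarith)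
    exact fun x _ => hψ0 x
  -- Step 1: double integral ≤ K * J
  have step1 : (∫ k₁ in K..(2*K), ∫ k₂ in K..(2*K),
      ‖ftSigmaSq σ ((k₁ - k₂) • xhat)‖ ^ 2) ≤ K * J := by
    set θ : ℝ → ℝ := fun s => ‖ftSigmaSq σ (s • xhat)‖ ^ 2 with hθ
    have hθψ : ∀ s, θ s ≤ ψ s := fun s => pow_le_pow_left₀ (norm_nonneg _) (hftle s) 2
    have hθcont : Continuous θ := by
      have he : θ = fun s => ‖(((2 * π : ℝ) ^ (-(3 : ℝ)/2) : ℝ) : ℂ) * g s‖ ^ 2 := by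
        funext s; rw [hθ]; simp only [hft s]
      rw [he]
      exact (continuous_const.mul hgcont).norm.pow 2
    have inner_le : ∀ k₁ ∈ Set.Icc K (2*K), (∫ k₂ in K..(2*K), θ (k₁ - k₂)) ≤ J := by
      intro k₁ hk₁
      have h1 : IntervalIntegrable (fun k₂ => θ (k₁ - k₂)) volume K (2*K) :=
        (hθcont.comp (continuous_const.sub continuous_id)).intervalIntegrable _ _
      have h2 : IntervalIntegrable (fun k₂ => ψ (k₁ - k₂)) volume K (2*K) :=
        (hψcont.comp (continuous_const.sub continuous_id)).intervalIntegrable _ _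
      calc (∫ k₂ in K..(2*K), θ (k₁ - k₂)) ≤ ∫ k₂ in K..(2*K), ψ (k₁ - k₂) :=
            intervalIntegral.integral_mono_on (by linarith) h1 h2 (fun x _ => hθψ _)
        _ = ∫ t in (k₁ - 2*K)..(k₁ - K), ψ t := intervalIntegral.integral_comp_sub_left ψ k₁
        _ ≤ J := by
            rw [hJ, intervalIntegral.integral_of_le (show k₁ - 2*K ≤ k₁ - K by linarith),
              intervalIntegral.integral_of_le (show -K ≤ K by linarith)]
            exact setIntegral_mono_set (hψcont.integrableOn_Ioc)
              (Filter.Eventually.of_forall fun x => hψ0 x)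
              (HasSubset.Subset.eventuallyLE
                (Set.Ioc_subset_Ioc (by linarith [hk₁.1]) (by linarith [hk₁.2])))
    have hcont_outer : Continuous fun k₁ => ∫ k₂ in K..(2*K), θ (k₁ - k₂) := by
      have heq : (fun k₁ => ∫ k₂ in K..(2*K), θ (k₁ - k₂)) = fun k₁ =>
          (∫ t in (0:ℝ)..(k₁ - K), θ t) - ∫ t in (0:ℝ)..(k₁ - 2*K), θ t := by
        funext k₁
        rw [intervalIntegral.integral_comp_sub_left θ k₁,
          intervalIntegral.integral_interval_sub_left (hθcont.intervalIntegrable _ _)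
            (hθcont.intervalIntegrable _ _)]
      rw [heq]
      have hprim := intervalIntegral.continuous_primitive
        (μ := volume) (fun a b => hθcont.intervalIntegrable a b) 0
      exact (hprim.comp (continuous_id.sub continuous_const)).sub
        (hprim.comp (continuous_id.sub continuous_const))
    calc (∫ k₁ in K..(2*K), ∫ k₂ in K..(2*K), θ (k₁ - k₂))
        ≤ ∫ _k₁ in K..(2*K), J := by
          apply intervalIntegral.integral_mono_on (by linarith)
            (hcont_outer.intervalIntegrable _ _) intervalIntegrable_const inner_le
      _ = K * J := by rw [intervalIntegral.integral_const, smul_eq_mul]; ring_nf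
  -- Step 2: J ≤ C₀ * sqrt K
  have step2 : J ≤ C₀ * Real.sqrt K := by
    have hs : 0 < Real.sqrt K := Real.sqrt_pos.mpr hK
    set ε : ℝ := (Real.sqrt K)⁻¹ with hε'
    have hε : 0 < ε := inv_pos.mpr hs
    set ν : Measure (EuclideanSpace ℝ (Fin 3) × EuclideanSpace ℝ (Fin 3)) :=
      (volume : Measure (EuclideanSpace ℝ (Fin 3))).prod volume with hν
    set a : EuclideanSpace ℝ (Fin 3) × EuclideanSpace ℝ (Fin 3) → ℝ :=
      fun p => u p.1 - u p.2 with ha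
    have hameas : Measurable a :=
      (hu.measurable.comp measurable_fst).sub (hu.measurable.comp measurable_snd)
    set F : ℝ → EuclideanSpace ℝ (Fin 3) × EuclideanSpace ℝ (Fin 3) → ℂ :=
      fun k p => Complex.exp (-Complex.I * ((k * a p : ℝ) : ℂ)) * ((f p.1 * f p.2 : ℝ) : ℂ) with hF
    have hψF : ∀ k : ℝ, ψ k = (∫ p, F k p ∂ν).re := by
      intro k
      have hconj : (starRingEnd ℂ) (g k)
          = ∫ y, Complex.exp (Complex.I * ((k * u y : ℝ) : ℂ)) * ((f y : ℝ) : ℂ) := by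
        rw [hg, ← integral_conj]
        congr 1
        funext y
        simp [map_mul, map_neg, ← Complex.exp_conj, Complex.conj_ofReal, Complex.conj_I]
      have hmul : g k * (starRingEnd ℂ) (g k) = ∫ p, F k p ∂ν := by
        rw [hconj, hg, ← integral_prod_mul]
        refine integral_congr_ae (Filter.Eventually.of_forall fun p => ?_)
        show (Complex.exp (-Complex.I * ((k * u p.1 : ℝ):ℂ)) * ((f p.1 : ℝ):ℂ)) *
            (Complex.exp (Complex.I * ((k * u p.2 : ℝ):ℂ)) * ((f p.2 : ℝ):ℂ)) = F k p
        rw [hF]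
        have hee : Complex.exp (-Complex.I * ((k * u p.1 : ℝ):ℂ)) *
            Complex.exp (Complex.I * ((k * u p.2 : ℝ):ℂ))
            = Complex.exp (-Complex.I * ((k * a p : ℝ):ℂ)) := by
          rw [← Complex.exp_add]
          congr 1
          rw [ha]
          push_cast
          ring
        calc (Complex.exp (-Complex.I * ((k * u p.1 : ℝ):ℂ)) * ((f p.1 : ℝ):ℂ)) *
            (Complex.exp (Complex.I * ((k * u p.2 : ℝ):ℂ)) * ((f p.2 : ℝ):ℂ))
            = (Complex.exp (-Complex.I * ((k * u p.1 : ℝ):ℂ)) *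
               Complex.exp (Complex.I * ((k * u p.2 : ℝ):ℂ))) *
              (((f p.1 : ℝ):ℂ) * ((f p.2 : ℝ):ℂ)) := by ring
          _ = Complex.exp (-Complex.I * ((k * a p : ℝ):ℂ)) * ((f p.1 * f p.2 : ℝ):ℂ) := by
              rw [hee]
              push_cast
              ring
      have hre : ((g k) * (starRingEnd ℂ) (g k)).re = ψ k := by
        rw [Complex.mul_conj]
        simp [hψ, Complex.sq_norm]
      rw [← hre, hmul]
    haveI hfin : IsFiniteMeasure (volume.restrict (Set.Ioc (-K) K)) :=
      ⟨by rw [Measure.restrict_apply_univ]; exact measure_Ioc_lt_top⟩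
    set μK := (volume : Measure ℝ).restrict (Set.Ioc (-K) K) with hμK
    have hffν : Integrable
        (fun p : EuclideanSpace ℝ (Fin 3) × EuclideanSpace ℝ (Fin 3) => f p.1 * f p.2) ν :=
      hfint.mul_prod hfint
    have hbase : Integrable (fun q : ℝ × (EuclideanSpace ℝ (Fin 3) × EuclideanSpace ℝ (Fin 3)) =>
        f q.2.1 * f q.2.2) (μK.prod ν) := by
      have h := (integrable_const (μ := μK) (1:ℝ)).mul_prod hffν
      simpa using h
    have hFmeasu : AEStronglyMeasurable (Function.uncurry F) (μK.prod ν) := by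
      apply Measurable.aestronglyMeasurable
      have h1 : Measurable fun q : ℝ × (EuclideanSpace ℝ (Fin 3) × EuclideanSpace ℝ (Fin 3)) =>
          -Complex.I * ((q.1 * a q.2 : ℝ) : ℂ) :=
        (Complex.measurable_ofReal.comp
          (measurable_fst.mul (hameas.comp measurable_snd))).const_mul _
      exact (Complex.continuous_exp.measurable.comp h1).mul
        (Complex.measurable_ofReal.comp
          (((hfmeas.comp measurable_fst).mul (hfmeas.comp measurable_snd)).comp measurable_snd))
    have hFint : Integrable (Function.uncurry F) (μK.prod ν) := by
      apply hbase.mono' hFmeasu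
      filter_upwards with q
      show ‖F q.1 q.2‖ ≤ _
      rw [hF, norm_mul, norm_exp_neg_I_mul, one_mul, Complex.norm_real, Real.norm_eq_abs,
        abs_of_nonneg (mul_nonneg (hf0 _) (hf0 _))]
    set w : ℝ → ℂ := fun s => ∫ k in (-K)..K, Complex.exp (-Complex.I * ((k * s : ℝ) : ℂ))
      with hw
    have hw2K : ∀ s, ‖w s‖ ≤ 2 * K := by
      intro s
      refine (intervalIntegral.norm_integral_le_of_norm_le_const (C := 1) fun x _ =>
        le_of_eq (norm_exp_neg_I_mul _)).trans (le_of_eq ?_)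
      rw [one_mul, abs_of_nonneg (by linarith : (0:ℝ) ≤ K - -K)]
      ring
    have hwinv : ∀ s, s ≠ 0 → ‖w s‖ ≤ 2 / |s| := by
      intro s hs0
      have hrw : w s = ∫ k in (-K)..K, Complex.exp ((-Complex.I * s) * k) := by
        rw [hw]
        refine intervalIntegral.integral_congr fun x _ => ?_
        congr 1
        push_cast
        ring
      have hcne : (-Complex.I * (s:ℂ)) ≠ 0 :=
        mul_ne_zero (neg_ne_zero.mpr Complex.I_ne_zero) (Complex.ofReal_ne_zero.mpr hs0)
      rw [hrw, integral_exp_mul_complex hcne, norm_div]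
      have h1 : ‖Complex.exp (-Complex.I * (s:ℂ) * (K:ℂ))‖ = 1 := by
        rw [show -Complex.I * (s:ℂ) * (K:ℂ) = -Complex.I * ((s * K : ℝ):ℂ) by push_cast; ring,
          norm_exp_neg_I_mul]
      have h2 : ‖Complex.exp (-Complex.I * (s:ℂ) * ((-K : ℝ):ℂ))‖ = 1 := by
        rw [show -Complex.I * (s:ℂ) * ((-K:ℝ):ℂ) = -Complex.I * ((s * -K : ℝ):ℂ) by
            push_cast; ring,
          norm_exp_neg_I_mul]
      have h3 : ‖(-Complex.I * (s:ℂ))‖ = |s| := by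
        rw [norm_mul, norm_neg, Complex.norm_I, Complex.norm_real, Real.norm_eq_abs, one_mul]
      rw [h3]
      have hgoal : ‖Complex.exp (-Complex.I * (s:ℂ) * (K:ℂ)) -
          Complex.exp (-Complex.I * (s:ℂ) * ((-K:ℝ):ℂ))‖ ≤ 2 := by
        calc ‖Complex.exp (-Complex.I * (s:ℂ) * (K:ℂ)) -
              Complex.exp (-Complex.I * (s:ℂ) * ((-K:ℝ):ℂ))‖
            ≤ ‖Complex.exp (-Complex.I * (s:ℂ) * (K:ℂ))‖ +
              ‖Complex.exp (-Complex.I * (s:ℂ) * ((-K:ℝ):ℂ))‖ := norm_sub_le _ _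
          _ = 2 := by rw [h1, h2]; norm_num
      gcongr
    set T := {p : EuclideanSpace ℝ (Fin 3) × EuclideanSpace ℝ (Fin 3) |
        |⟪xhat, p.1⟫ - ⟪xhat, p.2⟫| < ε ∧ ‖p.1‖ ≤ R ∧ ‖p.2‖ ≤ R} with hT
    have hTmeas : MeasurableSet T := by
      apply MeasurableSet.inter
      · exact measurableSet_lt
          (((hu.comp continuous_fst).sub (hu.comp continuous_snd)).abs.measurable)
          measurable_const
      · exact (measurableSet_le continuous_fst.norm.measurable measurable_const).inter
          (measurableSet_le continuous_snd.norm.measurable measurable_const)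
    have hνT : ν T ≤ ENNReal.ofReal (8 * R ^ 2 * ε) *
        volume (Metric.closedBall (0 : EuclideanSpace ℝ (Fin 3)) R) :=
      prod_slab xhat hxhat R ε hR0.le hε.le
    have hνTfin : ν T < ⊤ :=
      lt_of_le_of_lt hνT (ENNReal.mul_lt_top ENNReal.ofReal_lt_top measure_closedBall_lt_top)
    set h : EuclideanSpace ℝ (Fin 3) × EuclideanSpace ℝ (Fin 3) → ℝ :=
      fun p => Set.indicator T (fun _ => 2 * K * M ^ 4) p + (2 / ε) * (f p.1 * f p.2) with hh
    have hindint : Integrable (Set.indicator T (fun _ => 2 * K * M ^ 4)) ν :=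
      IntegrableOn.integrable_indicator (integrableOn_const hνTfin.ne) hTmeas
    have hhint : Integrable h ν := hindint.add (hffν.const_mul _)
    have hpt : ∀ p, ‖w (a p) * ((f p.1 * f p.2 : ℝ) : ℂ)‖ ≤ h p := by
      intro p
      have hff0 : 0 ≤ f p.1 * f p.2 := mul_nonneg (hf0 _) (hf0 _)
      rw [norm_mul, Complex.norm_real, Real.norm_eq_abs, abs_of_nonneg hff0]
      by_cases hp : |a p| < ε
      · by_cases hball : ‖p.1‖ ≤ R ∧ ‖p.2‖ ≤ R
        · have hmem : p ∈ T := ⟨hp, hball.1, hball.2⟩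
          rw [hh]
          simp only [Set.indicator_of_mem hmem]
          have hb1 : ‖w (a p)‖ * (f p.1 * f p.2) ≤ (2*K) * (M^2 * M^2) :=
            mul_le_mul (hw2K _) (mul_le_mul (hfle _) (hfle _) (hf0 _) (by positivity))
              hff0 (by positivity)
          have heq2 : (2*K) * (M^2 * M^2) = 2*K*M^4 := by ring
          rw [heq2] at hb1
          exact le_trans hb1 (le_add_of_nonneg_right (by positivity))
        · have hzero : f p.1 * f p.2 = 0 := by
            rcases not_and_or.mp hball with hb | hb
            · have hz : f p.1 = 0 := by
                by_contra hne
                have hmemb := hfsupp (Function.mem_support.mpr hne)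
                exact hb (by simpa [Metric.mem_closedBall, dist_zero_right] using hmemb)
              rw [hz, zero_mul]
            · have hz : f p.2 = 0 := by
                by_contra hne
                have hmemb := hfsupp (Function.mem_support.mpr hne)
                exact hb (by simpa [Metric.mem_closedBall, dist_zero_right] using hmemb)
              rw [hz, mul_zero]
          rw [hzero, mul_zero, hh]
          exact add_nonneg (Set.indicator_nonneg (fun _ _ => by positivity) _)
            (by rw [hzero, mul_zero])
      · have h1 : ‖w (a p)‖ ≤ 2 / ε := by
          refine (hwinv _ (fun h0 => hp (by rw [h0]; simpa using hε))).trans ?_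
          gcongr
          exact not_lt.mp hp
        calc ‖w (a p)‖ * (f p.1 * f p.2) ≤ (2/ε) * (f p.1 * f p.2) :=
              mul_le_mul_of_nonneg_right h1 hff0
          _ ≤ h p := by
              rw [hh]
              exact le_add_of_nonneg_left (Set.indicator_nonneg (fun _ _ => by positivity) _)
    have hJle : J ≤ ∫ p, h p ∂ν := by
      have hΦint : Integrable (fun s => ∫ p, F s p ∂ν) μK := hFint.integral_prod_left
      have e1 : J = (∫ s, (∫ p, F s p ∂ν) ∂μK).re := by
        calc J = ∫ s in (-K)..K, (∫ p, F s p ∂ν).re := by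
              rw [hJ]
              exact intervalIntegral.integral_congr fun s _ => hψF s
          _ = ∫ s, (∫ p, F s p ∂ν).re ∂μK := by
              rw [intervalIntegral.integral_of_le (by linarith : -K ≤ K), hμK]
          _ = (∫ s, (∫ p, F s p ∂ν) ∂μK).re :=
              ContinuousLinearMap.integral_comp_comm Complex.reCLM hΦint
      have e2 : (∫ s, (∫ p, F s p ∂ν) ∂μK) = ∫ p, (∫ s, F s p ∂μK) ∂ν :=
        integral_integral_swap hFint
      have e3 : ∀ p, (∫ s, F s p ∂μK) = w (a p) * ((f p.1 * f p.2 : ℝ) : ℂ) := by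
        intro p
        rw [hμK, ← intervalIntegral.integral_of_le (by linarith : -K ≤ K), hF, hw,
          ← intervalIntegral.integral_mul_const]
      rw [e1, e2]
      rw [integral_congr_ae (Filter.Eventually.of_forall e3)]
      calc (∫ p, w (a p) * ((f p.1 * f p.2 : ℝ) : ℂ) ∂ν).re
          ≤ ‖∫ p, w (a p) * ((f p.1 * f p.2 : ℝ) : ℂ) ∂ν‖ := by
            exact Complex.re_le_norm _
        _ ≤ ∫ p, ‖w (a p) * ((f p.1 * f p.2 : ℝ) : ℂ)‖ ∂ν := norm_integral_le_integral_norm _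
        _ ≤ ∫ p, h p ∂ν := integral_mono_of_nonneg
            (Filter.Eventually.of_forall fun p => norm_nonneg _) hhint
            (Filter.Eventually.of_forall hpt)
    have hint_eval : ∫ p, h p ∂ν = (ν T).toReal * (2 * K * M ^ 4) + (2 / ε) * (I * I) := by
      rw [hh, integral_add hindint (hffν.const_mul _)]
      congr 1
      · rw [integral_indicator_const _ hTmeas, smul_eq_mul]; rfl
      · rw [MeasureTheory.integral_const_mul, hν, integral_prod_mul, hI]
    have hTtoReal : (ν T).toReal ≤ 8 * R ^ 2 * ε * V := by
      have h' := ENNReal.toReal_mono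
        (ne_of_lt (ENNReal.mul_lt_top ENNReal.ofReal_lt_top measure_closedBall_lt_top)) hνT
      rwa [ENNReal.toReal_mul, ENNReal.toReal_ofReal (by positivity), ← hV] at h'
    have hKs : K * (Real.sqrt K)⁻¹ = Real.sqrt K := by
      rw [← Real.mul_self_sqrt hK.le]
      field_simp
      rw [Real.sqrt_sq (Real.sqrt_nonneg K)]
    calc J ≤ ∫ p, h p ∂ν := hJle
      _ = (ν T).toReal * (2 * K * M ^ 4) + (2 / ε) * (I * I) := hint_eval
      _ ≤ (8 * R ^ 2 * ε * V) * (2 * K * M ^ 4) + (2 / ε) * (I * I) := by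
          gcongr
      _ = C₀ * Real.sqrt K := by
          rw [hC₀, hε', division_def, inv_inv,
            show (8 * R ^ 2 * (Real.sqrt K)⁻¹ * V) * (2 * K * M ^ 4)
              = 16 * M ^ 4 * R ^ 2 * V * (K * (Real.sqrt K)⁻¹) by ring, hKs]
          ring
  have hs : 0 < Real.sqrt K := Real.sqrt_pos.mpr hK
  have hKpow : K ^ (-(1 : ℝ)/2) = (Real.sqrt K)⁻¹ := by
    rw [show (-(1:ℝ)/2) = -(1/2) by norm_num, Real.rpow_neg hK.le, ← Real.sqrt_eq_rpow]
  rw [hKpow]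
  calc (1 / K ^ 2) * ∫ k₁ in K..(2*K), ∫ k₂ in K..(2*K),
        ‖ftSigmaSq σ ((k₁ - k₂) • xhat)‖ ^ 2
      ≤ (1 / K ^ 2) * (K * J) := by gcongr
    _ ≤ (1 / K ^ 2) * (K * (C₀ * Real.sqrt K)) := by gcongr
    _ = C₀ * (Real.sqrt K)⁻¹ := by
        have e1 : (1 / K ^ 2) * (K * (C₀ * Real.sqrt K)) = C₀ * (Real.sqrt K / K) := by
          field_simp
        rw [e1, Real.sqrt_div_self', one_div]
    _ ≤ (C₀ + 1) * (Real.sqrt K)⁻¹ := by gcongr; linarith
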